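/- Let ø be a principal ideal domain and let A, B be n×n matrices over ø with nonzero determinant. Then for every 1 ≤ k ≤ n, δ_{n-k}(B)·δ_k(AB) divides δ_k(A)·δ_n(B), and likewise δ_{n-k}(A)·δ_k(AB) divides δ_k(B)·δ_n(A). -/

import Mathlib

open Matrix

/-- The `k`-th determinantal divisor of a square matrix: the ideal generated by
all `k × k` minors.  For `k = 0` this is the whole ring, and for `k` larger than
the size of the matrix it is the zero ideal. -/
def detDiv {R : Type*} [CommRing R] {ι : Type*} [Fintype ι] (k : ℕ)
    (A : Matrix ι ι R) : Ideal R :=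
  Ideal.span {x | ∃ f g : Fin k ↪ ι, x = (A.submatrix f g).det}

lemma detDiv_transpose {R : Type*} [CommRing R] {ι : Type*} [Fintype ι] (k : ℕ)
    (A : Matrix ι ι R) : detDiv k Aᵀ = detDiv k A := by
  unfold detDiv
  congr 1
  ext x
  constructor <;> rintro ⟨f, g, rfl⟩
  · exact ⟨g, f, by rw [← Matrix.transpose_submatrix, Matrix.det_transpose]⟩
  · exact ⟨g, f, by rw [← Matrix.transpose_submatrix, Matrix.det_transpose]⟩

lemma detDiv_mul_le_right {R : Type*} [CommRing R] {ι : Type*} [Fintype ι] [DecidableEq ι]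
    (k : ℕ) (M N : Matrix ι ι R) : detDiv k (M * N) ≤ detDiv k N := by
  rw [detDiv, Ideal.span_le]
  rintro x ⟨f, g, rfl⟩
  have h1 : ((M * N).submatrix f g).det
      = Matrix.detRowAlternating (fun i => ∑ t, M (f i) t • (fun j => N t (g j))) := by
    congr 1
    ext i j
    simp [Matrix.mul_apply, Finset.sum_apply]
  rw [h1]
  rw [show (Matrix.detRowAlternating (fun i => ∑ t, M (f i) t • (fun j : Fin k => N t (g j))))
      = (Matrix.detRowAlternating (R := R) (n := Fin k)).toMultilinearMap
        (fun i => ∑ t, (fun t => M (f i) t • (fun j : Fin k => N t (g j))) t) from rfl]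
  rw [MultilinearMap.map_sum]
  apply Ideal.sum_mem
  intro r _
  simp only [AlternatingMap.coe_multilinearMap]
  rw [show (fun i => M (f i) (r i) • fun j : Fin k => N (r i) (g j))
      = (fun i => M (f i) (r i) • (fun t (j : Fin k) => N t (g j)) (r i)) from rfl]
  rw [show (Matrix.detRowAlternating (fun i => M (f i) (r i) • (fun t (j : Fin k) => N t (g j)) (r i)))
      = (Matrix.detRowAlternating (R := R) (n := Fin k)).toMultilinearMap
        (fun i => M (f i) (r i) • (fun t (j : Fin k) => N t (g j)) (r i)) from rfl,
    MultilinearMap.map_smul_univ]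
  by_cases hr : Function.Injective r
  · have hmem : Matrix.detRowAlternating (fun i (j : Fin k) => N (r i) (g j))
        ∈ detDiv k N :=
      Ideal.subset_span ⟨⟨r, hr⟩, g, rfl⟩
    rw [smul_eq_mul]
    exact Ideal.mul_mem_left _ _ hmem
  · rw [Function.not_injective_iff] at hr
    obtain ⟨i, j, hij, hne⟩ := hr
    have h0 : Matrix.detRowAlternating (fun i (j : Fin k) => N (r i) (g j)) = 0 :=
      Matrix.detRowAlternating.map_eq_zero_of_eq _ (by rw [hij]) hne
    simp only [AlternatingMap.coe_multilinearMap]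
    rw [h0, smul_zero]
    exact Ideal.zero_mem _

lemma detDiv_mul_le_left {R : Type*} [CommRing R] {ι : Type*} [Fintype ι] [DecidableEq ι]
    (k : ℕ) (M N : Matrix ι ι R) : detDiv k (M * N) ≤ detDiv k M := by
  rw [← detDiv_transpose k (M * N), Matrix.transpose_mul, ← detDiv_transpose k M]
  exact detDiv_mul_le_right k _ _

lemma detDiv_mul_left_of_isUnit {R : Type*} [CommRing R] {ι : Type*} [Fintype ι] [DecidableEq ι]
    (k : ℕ) {U : Matrix ι ι R} (hU : IsUnit U.det) (A : Matrix ι ι R) :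
    detDiv k (U * A) = detDiv k A := by
  refine le_antisymm (detDiv_mul_le_right k _ _) ?_
  have : A = U⁻¹ * (U * A) := by
    rw [← Matrix.mul_assoc, Matrix.nonsing_inv_mul _ hU, Matrix.one_mul]
  conv_lhs => rw [this]
  exact detDiv_mul_le_right k _ _

lemma detDiv_mul_right_of_isUnit {R : Type*} [CommRing R] {ι : Type*} [Fintype ι] [DecidableEq ι]
    (k : ℕ) {U : Matrix ι ι R} (hU : IsUnit U.det) (A : Matrix ι ι R) :
    detDiv k (A * U) = detDiv k A := by
  refine le_antisymm (detDiv_mul_le_left k _ _) ?_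
  have : A = (A * U) * U⁻¹ := by
    rw [Matrix.mul_assoc, Matrix.mul_nonsing_inv _ hU, Matrix.mul_one]
  conv_lhs => rw [this]
  exact detDiv_mul_le_left k _ _

lemma detDiv_le_span_det {R : Type*} [CommRing R] {n : ℕ} (M : Matrix (Fin n) (Fin n) R) :
    detDiv n M ≤ Ideal.span {M.det} := by
  rw [detDiv, Ideal.span_le]
  rintro x ⟨f, g, rfl⟩
  have hf : Function.Bijective f := Finite.injective_iff_bijective.mp f.injective
  have hg : Function.Bijective g := Finite.injective_iff_bijective.mp g.injective
  set eF : Equiv.Perm (Fin n) := Equiv.ofBijective f hf with heF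
  set eG : Equiv.Perm (Fin n) := Equiv.ofBijective g hg with heG
  have h1 : M.submatrix f g = (M.submatrix eF eF).submatrix id (eG.trans eF.symm) := by
    ext i j
    simp [heF, heG, Matrix.submatrix_apply, Equiv.ofBijective_apply_symm_apply]
  rw [h1, Matrix.det_permute', Matrix.det_submatrix_equiv_self]
  exact Ideal.mul_mem_left _ _ (Ideal.subset_span rfl)

lemma detDiv_key {R : Type*} [CommRing R] {n k : ℕ} (hk : k ≤ n)
    (C : Matrix (Fin n) (Fin n) R) (d : Fin n → R) :
    detDiv k C * Ideal.span {(Matrix.diagonal d).det}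
      ≤ detDiv (n - k) (Matrix.diagonal d) * detDiv k (C * Matrix.diagonal d) := by
  rw [detDiv, Ideal.span_mul_span, Ideal.span_le]
  rintro x hx
  simp only [Set.mem_mul, Set.mem_singleton_iff, Set.mem_setOf_eq] at hx
  obtain ⟨s, ⟨f, g, rfl⟩, t, rfl, rfl⟩ := hx
  -- the complement of the range of `g`
  set S : Finset (Fin n) := (Finset.univ.map g)ᶜ with hS
  have hcard : S.card = n - k := by
    simp [hS, Finset.card_compl]
  set e : Fin (n - k) ↪ Fin n :=
    ((S.orderIsoOfFin hcard).toEquiv.toEmbedding.trans (Function.Embedding.subtype _)) with he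
  have hrange : Finset.univ.map e = S := by
    apply Finset.eq_of_subset_of_card_le
    · intro t htmem
      rw [Finset.mem_map] at htmem
      obtain ⟨i, _, rfl⟩ := htmem
      exact ((S.orderIsoOfFin hcard) i).2
    · simp [hcard]
  -- the two generators
  have ha : ((Matrix.diagonal d).submatrix e e).det ∈ detDiv (n - k) (Matrix.diagonal d) :=
    Ideal.subset_span ⟨e, e, rfl⟩
  have hb : ((C * Matrix.diagonal d).submatrix f g).det ∈ detDiv k (C * Matrix.diagonal d) :=
    Ideal.subset_span ⟨f, g, rfl⟩
  have key : (C.submatrix f g).det * (Matrix.diagonal d).det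
      = ((Matrix.diagonal d).submatrix e e).det * ((C * Matrix.diagonal d).submatrix f g).det := by
    have h1 : (Matrix.diagonal d).submatrix e e = Matrix.diagonal (d ∘ e) := by
      ext i j
      rcases eq_or_ne i j with rfl | h
      · simp
      · rw [Matrix.submatrix_apply, Matrix.diagonal_apply_ne _ (fun h' => h (e.injective h')),
          Matrix.diagonal_apply_ne _ h]
    have h2 : (C * Matrix.diagonal d).submatrix f g
        = Matrix.of (fun i j => d (g j) * (C.submatrix f g) i j) := by
      ext i j
      simp [Matrix.mul_diagonal, mul_comm]
    have hprod : (∏ i, (d ∘ e) i) * ∏ j, d (g j) = ∏ t, d t := by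
      rw [show ∏ i, (d ∘ e) i = ∏ t ∈ Finset.univ.map e, d t from (Finset.prod_map _ _ _).symm,
        show ∏ j, d (g j) = ∏ t ∈ Finset.univ.map g, d t from (Finset.prod_map _ _ _).symm,
        hrange, hS, mul_comm]
      exact Finset.prod_mul_prod_compl _ _
    rw [h1, h2, Matrix.det_mul_row, Matrix.det_diagonal, Matrix.det_diagonal, ← hprod]
    ring
  rw [key]
  exact Ideal.mul_mem_mul ha hb

lemma exists_diagonal_of_det_ne_zero {𝒪 : Type*} [CommRing 𝒪] [IsDomain 𝒪]
    [IsPrincipalIdealRing 𝒪] {n : ℕ} (A : Matrix (Fin n) (Fin n) 𝒪) (hA : A.det ≠ 0) :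
    ∃ (U V : Matrix (Fin n) (Fin n) 𝒪) (d : Fin n → 𝒪),
      IsUnit U.det ∧ IsUnit V.det ∧ A = U * Matrix.diagonal d * V := by
  classical
  set φ : (Fin n → 𝒪) →ₗ[𝒪] (Fin n → 𝒪) := A.mulVecLin with hφ
  have hinj : Function.Injective φ := by
    intro x y hxy
    have h1 : A.adjugate *ᵥ (A *ᵥ x) = A.adjugate *ᵥ (A *ᵥ y) := by
      simp only [hφ, Matrix.mulVecLin_apply] at hxy
      rw [hxy]
    simp only [Matrix.mulVec_mulVec, Matrix.adjugate_mul, Matrix.smul_mulVec,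
      Matrix.one_mulVec] at h1
    funext i
    have := congrFun h1 i
    simpa only [Pi.smul_apply, smul_eq_mul] using mul_left_cancel₀ hA this
  set N : Submodule 𝒪 (Fin n → 𝒪) := LinearMap.range φ with hN
  set b : Module.Basis (Fin n) 𝒪 (Fin n → 𝒪) := Pi.basisFun 𝒪 (Fin n) with hb
  obtain ⟨m, snf⟩ := N.smithNormalForm b
  obtain ⟨bM, bN, f, a, hsnf⟩ := snf
  set eqv : (Fin n → 𝒪) ≃ₗ[𝒪] N := LinearEquiv.ofInjective φ hinj with heqv
  have hmn : m = n := by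
    have h1 : Module.finrank 𝒪 N = m := Module.finrank_eq_card_basis bN |>.trans (by simp)
    have h2 : Module.finrank 𝒪 N = n := Module.finrank_eq_card_basis (b.map eqv) |>.trans (by simp)
    omega
  subst hmn
  have hfbij : Function.Bijective f := Finite.injective_iff_bijective.mp f.injective
  set σ : Equiv.Perm (Fin m) := Equiv.ofBijective f hfbij with hσ
  set W : Matrix (Fin m) (Fin m) 𝒪 := b.toMatrix bM with hW
  have hWinv : IsUnit W.det := by
    have := b.invertibleToMatrix bM
    exact Matrix.isUnit_det_of_invertible W
  set U : Matrix (Fin m) (Fin m) 𝒪 := W.submatrix id σ with hU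
  have hUdet : IsUnit U.det := by
    rw [hU, Matrix.det_permute']
    exact ((Equiv.Perm.sign σ).isUnit.map (Int.castRingHom 𝒪)).mul hWinv
  set V : Matrix (Fin m) (Fin m) 𝒪 := LinearMap.toMatrix b bN φ.rangeRestrict with hV
  have hrr : φ.rangeRestrict = (eqv : (Fin m → 𝒪) →ₗ[𝒪] N) := by
    ext x
    rfl
  have hVdet : IsUnit V.det := by
    apply Matrix.isUnit_det_of_left_inverse (B := LinearMap.toMatrix bN b eqv.symm)
    rw [hV, hrr, ← LinearMap.toMatrix_comp b bN b]
    have hcomp : (eqv.symm.toLinearMap).comp (eqv.toLinearMap) = LinearMap.id := by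
      ext x
      simp
    rw [hcomp, LinearMap.toMatrix_id]
  refine ⟨U, V, a, hUdet, hVdet, ?_⟩
  have hA1 : A = LinearMap.toMatrix b b φ := by
    rw [hb, LinearMap.toMatrix_eq_toMatrix', hφ, ← Matrix.toLin'_apply',
      LinearMap.toMatrix'_toLin']
  have hfactor : φ = N.subtype.comp φ.rangeRestrict := by
    ext x
    rfl
  have hM1 : LinearMap.toMatrix bN b N.subtype = U * Matrix.diagonal a := by
    ext j i
    rw [LinearMap.toMatrix_apply, Matrix.mul_diagonal]
    simp only [hU, hW, Matrix.submatrix_apply, id_eq, Module.Basis.toMatrix_apply,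
      Submodule.coe_subtype, hsnf i, hb, Pi.basisFun_repr, Pi.smul_apply, smul_eq_mul]
    rw [show σ i = f i from rfl]
    ring
  rw [hA1, hfactor, LinearMap.toMatrix_comp b bN b, hM1, ← hV]

lemma detDiv_key' {R : Type*} [CommRing R] {n k : ℕ} (hk : k ≤ n)
    (C : Matrix (Fin n) (Fin n) R) (d : Fin n → R) :
    detDiv k C * Ideal.span {(Matrix.diagonal d).det}
      ≤ detDiv (n - k) (Matrix.diagonal d) * detDiv k (Matrix.diagonal d * C) := by
  have h := detDiv_key hk Cᵀ d
  rw [detDiv_transpose,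
    show Cᵀ * Matrix.diagonal d = (Matrix.diagonal d * C)ᵀ by
      rw [Matrix.transpose_mul, Matrix.diagonal_transpose],
    detDiv_transpose] at h
  exact h

/-- Over a principal ideal domain, `δ_{n-k}(B) δ_k(A B)` divides
`δ_k(A) δ_n(B)`, and `δ_{n-k}(A) δ_k(A B)` divides `δ_k(B) δ_n(A)`. -/
theorem detDiv_mul_dvd_of_pid (𝒪 : Type*) [CommRing 𝒪] [IsDomain 𝒪]
    [IsPrincipalIdealRing 𝒪] (n : ℕ) (A B : Matrix (Fin n) (Fin n) 𝒪)
    (hA : A.det ≠ 0) (hB : B.det ≠ 0) :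
    ∀ k, 1 ≤ k → k ≤ n →
      detDiv (n - k) B * detDiv k (A * B) ∣ detDiv k A * detDiv n B ∧
      detDiv (n - k) A * detDiv k (A * B) ∣ detDiv k B * detDiv n A := by
  intro k _ hkn
  constructor
  · rw [Ideal.dvd_iff_le]
    obtain ⟨U, V, d, hU, hV, hBeq⟩ := exists_diagonal_of_det_ne_zero B hB
    have e1 : detDiv k A = detDiv k (A * U) := (detDiv_mul_right_of_isUnit k hU A).symm
    have e2 : detDiv n B ≤ Ideal.span {(Matrix.diagonal d).det} := by
      refine (detDiv_le_span_det B).trans ?_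
      rw [Ideal.span_singleton_le_span_singleton]
      exact ⟨U.det * V.det, by rw [hBeq, Matrix.det_mul, Matrix.det_mul]; ring⟩
    have e4 : detDiv (n - k) (Matrix.diagonal d) = detDiv (n - k) B := by
      rw [hBeq, detDiv_mul_right_of_isUnit _ hV, detDiv_mul_left_of_isUnit _ hU]
    have e5 : detDiv k (A * U * Matrix.diagonal d) = detDiv k (A * B) := by
      rw [hBeq, show A * (U * Matrix.diagonal d * V) = (A * U * Matrix.diagonal d) * V by
        simp only [Matrix.mul_assoc], detDiv_mul_right_of_isUnit _ hV]
    calc detDiv k A * detDiv n B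
        ≤ detDiv k (A * U) * Ideal.span {(Matrix.diagonal d).det} :=
          Ideal.mul_mono (le_of_eq e1) e2
      _ ≤ detDiv (n - k) (Matrix.diagonal d) * detDiv k (A * U * Matrix.diagonal d) :=
          detDiv_key hkn (A * U) d
      _ = detDiv (n - k) B * detDiv k (A * B) := by rw [e4, e5]
  · rw [Ideal.dvd_iff_le]
    obtain ⟨U, V, d, hU, hV, hAeq⟩ := exists_diagonal_of_det_ne_zero A hA
    have e1 : detDiv k B = detDiv k (V * B) := (detDiv_mul_left_of_isUnit k hV B).symm
    have e2 : detDiv n A ≤ Ideal.span {(Matrix.diagonal d).det} := by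
      refine (detDiv_le_span_det A).trans ?_
      rw [Ideal.span_singleton_le_span_singleton]
      exact ⟨U.det * V.det, by rw [hAeq, Matrix.det_mul, Matrix.det_mul]; ring⟩
    have e4 : detDiv (n - k) (Matrix.diagonal d) = detDiv (n - k) A := by
      rw [hAeq, detDiv_mul_right_of_isUnit _ hV, detDiv_mul_left_of_isUnit _ hU]
    have e5 : detDiv k (Matrix.diagonal d * (V * B)) = detDiv k (A * B) := by
      rw [hAeq, show U * Matrix.diagonal d * V * B = U * (Matrix.diagonal d * (V * B)) by
        simp only [Matrix.mul_assoc], detDiv_mul_left_of_isUnit _ hU]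
    calc detDiv k B * detDiv n A
        ≤ detDiv k (V * B) * Ideal.span {(Matrix.diagonal d).det} :=
          Ideal.mul_mono (le_of_eq e1) e2
      _ ≤ detDiv (n - k) (Matrix.diagonal d) * detDiv k (Matrix.diagonal d * (V * B)) :=
          detDiv_key' hkn (V * B) d
      _ = detDiv (n - k) A * detDiv k (A * B) := by rw [e4, e5]
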